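/- Let I ⊆ [0,1] satisfy the DCC and let (λ_l) be a strictly increasing sequence in (0,1]. Then the set J = { λ_l · i : i ∈ I, l ∈ ℕ } satisfies the DCC. -/

import Mathlib

/-- A set `S` satisfies the DCC if it contains no infinite strictly decreasing
sequence. -/
def HasDCC (S : Set ℝ) : Prop := ¬ ∃ f : ℕ → ℝ, (∀ n, f n ∈ S) ∧ StrictAnti f

/-- Let `I ⊆ [0,1]` satisfy the DCC and `(λ_l)` be a strictly increasing sequence
in `(0,1]`. Then `J = { λ_l · i : i ∈ I, l ∈ ℕ }` satisfies the DCC. -/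
theorem scaled_dcc (I : Set ℝ) (hI : I ⊆ Set.Icc 0 1) (hdcc : HasDCC I)
    (lam : ℕ → ℝ) (hlam : StrictMono lam) (hlam' : ∀ l, lam l ∈ Set.Ioc (0:ℝ) 1) :
    HasDCC { x : ℝ | ∃ i ∈ I, ∃ l : ℕ, x = lam l * i } := by
  rintro ⟨f, hf, hanti⟩
  choose i hiI l hfe using hf
  have hnn : ∀ n, 0 ≤ f n := fun n => by
    rw [hfe n]
    exact mul_nonneg (hlam' (l n)).1.le (hI (hiI n)).1
  have hpos : ∀ n, 0 < f n := fun n =>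
    lt_of_le_of_lt (hnn (n + 1)) (hanti (Nat.lt_succ_self n))
  have hipos : ∀ n, 0 < i n := by
    intro n
    rcases lt_or_eq_of_le (hI (hiI n)).1 with h | h
    · exact h
    · exact absurd (hfe n) (by rw [← h, mul_zero]; exact (hpos n).ne')
  -- key: if m < n and l m ≤ l n then i n < i m
  have key : ∀ m n, m < n → l m ≤ l n → i n < i m := by
    intro m n hmn hl
    have h1 : lam (l n) * i n < lam (l m) * i m := by
      rw [← hfe m, ← hfe n]; exact hanti hmn
    have h2 : lam (l m) ≤ lam (l n) := hlam.monotone hl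
    have h3 : 0 < lam (l n) := (hlam' (l n)).1
    nlinarith [(hipos m).le]
  -- get a monotone subsequence of l
  obtain ⟨g, hg⟩ := ((Set.isWF_univ_iff.2 (inferInstance : WellFoundedLT ℕ)).isPWO).exists_monotone_subseq
    (f := l) (fun n => Set.mem_univ n)
  exact hdcc ⟨i ∘ g, fun n => hiI (g n), fun a b hab =>
    key (g a) (g b) (g.strictMono hab) (hg hab.le)⟩
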